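/- arXiv:0901.2998 — 4 statements merged into one kernel-verified Lean document; each statement's English description precedes it below -/
import Mathlib

section
/- Let I be a real prime ideal in ℝ[x₁,…,xₙ] (i.e., for all f₁,…,f_m ∈ ℝ[x], Σ fᵢ² ∈ I implies each fᵢ ∈ I), with I ≠ ℝ[x]. Then the extension ideal I' = ℂ[x]·I (the ideal of ℂ[x₁,…,xₙ] generated by the image of I under coefficient inclusion ℝ → ℂ) is a prime ideal of ℂ[x₁,…,xₙ]. -/
open MvPolynomial

noncomputable section

/-- An ideal of the real polynomial ring is real if whenever a finite sum of squares
lies in it, each summand lies in it. -/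
def IsRealIdeal {n : ℕ} (I : Ideal (MvPolynomial (Fin n) ℝ)) : Prop :=
  ∀ (m : ℕ) (f : Fin m → MvPolynomial (Fin n) ℝ),
    (∑ i, f i ^ 2) ∈ I → ∀ i, f i ∈ I

/-- Rank of the Jacobian matrix of a family of polynomials at a point. -/
def jacRank {K : Type*} [Field K] {n m : ℕ} (f : Fin m → MvPolynomial (Fin n) K)
    (a : Fin n → K) : ℕ :=
  (Matrix.of fun i j => MvPolynomial.eval a (MvPolynomial.pderiv j (f i))).rank

/-- `r` is the rank of the ideal `I` with generating family `f`: the maximal Jacobian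
rank over the points of the real zero set of `I`. -/
def IsJacobianRankOf {K : Type*} [Field K] {n m : ℕ} (f : Fin m → MvPolynomial (Fin n) K)
    (I : Ideal (MvPolynomial (Fin n) K)) (r : ℕ) : Prop :=
  (∃ a ∈ MvPolynomial.zeroLocus K I, jacRank f a = r) ∧
    ∀ a ∈ MvPolynomial.zeroLocus K I, jacRank f a ≤ r

/-- `V` has a point with a neighborhood (in `V`) homeomorphic to an open subset of `ℝ^d`. -/
def HasLocalDim {n : ℕ} (V : Set (Fin n → ℝ)) (d : ℕ) : Prop :=
  ∃ x ∈ V, ∃ U : Set (Fin n → ℝ), IsOpen U ∧ x ∈ U ∧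
    ∃ W : Set (Fin d → ℝ), IsOpen W ∧ Nonempty (↥(V ∩ U) ≃ₜ ↥W)

/-- The topological dimension of `V ⊆ ℝⁿ` equals `d` (with `dim ∅ = -1`). -/
def TopDimEq {n : ℕ} (V : Set (Fin n → ℝ)) (d : ℤ) : Prop :=
  (V = ∅ ∧ d = -1) ∨
  (∃ m : ℕ, d = (m : ℤ) ∧ HasLocalDim V m ∧ ∀ m' : ℕ, HasLocalDim V m' → m' ≤ m)

/-- A semialgebraic set: a finite union of finite intersections of sets of the form
`{g > 0}`, `{g ≥ 0}`, `{g = 0}`. -/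
def IsSemialgebraic {n : ℕ} (S : Set (Fin n → ℝ)) : Prop :=
  ∃ (s : ℕ) (r : Fin s → ℕ) (g : (i : Fin s) → Fin (r i) → MvPolynomial (Fin n) ℝ)
    (c : (i : Fin s) → Fin (r i) → Fin 3),
    S = ⋃ i, ⋂ j, {x | (c i j = 0 → MvPolynomial.eval x (g i j) > 0) ∧
      (c i j = 1 → MvPolynomial.eval x (g i j) ≥ 0) ∧
      (c i j = 2 → MvPolynomial.eval x (g i j) = 0)}

private lemma aux_zero {n : ℕ} (p q : MvPolynomial (Fin n) ℝ)
    (h : MvPolynomial.map (algebraMap ℝ ℂ) p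
        + MvPolynomial.C Complex.I * MvPolynomial.map (algebraMap ℝ ℂ) q = 0) :
    p = 0 ∧ q = 0 := by
  have key : ∀ m, MvPolynomial.coeff m p = 0 ∧ MvPolynomial.coeff m q = 0 := by
    intro m
    have := congrArg (MvPolynomial.coeff m) h
    simp only [MvPolynomial.coeff_add, MvPolynomial.coeff_C_mul, MvPolynomial.coeff_map,
      MvPolynomial.coeff_zero] at this
    have h2 : (((MvPolynomial.coeff m p : ℝ) : ℂ) + Complex.I * ((MvPolynomial.coeff m q : ℝ) : ℂ)) = 0 := by
      exact_mod_cast this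
    constructor
    · have := congrArg Complex.re h2; simpa using this
    · have := congrArg Complex.im h2; simpa using this
  exact ⟨MvPolynomial.ext _ _ fun m => (key m).1, MvPolynomial.ext _ _ fun m => (key m).2⟩

private lemma aux_unique {n : ℕ} (p q p' q' : MvPolynomial (Fin n) ℝ)
    (h : MvPolynomial.map (algebraMap ℝ ℂ) p
        + MvPolynomial.C Complex.I * MvPolynomial.map (algebraMap ℝ ℂ) q
      = MvPolynomial.map (algebraMap ℝ ℂ) p'
        + MvPolynomial.C Complex.I * MvPolynomial.map (algebraMap ℝ ℂ) q') :
    p = p' ∧ q = q' := by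
  have h0 : MvPolynomial.map (algebraMap ℝ ℂ) (p - p')
      + MvPolynomial.C Complex.I * MvPolynomial.map (algebraMap ℝ ℂ) (q - q') = 0 := by
    simp only [map_sub]
    ring_nf
    linear_combination h
  obtain ⟨h1, h2⟩ := aux_zero _ _ h0
  exact ⟨sub_eq_zero.mp h1, sub_eq_zero.mp h2⟩

private lemma aux_II {n : ℕ} :
    (MvPolynomial.C Complex.I : MvPolynomial (Fin n) ℂ) * MvPolynomial.C Complex.I = -1 := by
  rw [← map_mul, Complex.I_mul_I, map_neg, map_one]

private lemma aux_mul {n : ℕ} (a b p q : MvPolynomial (Fin n) ℝ) :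
    (MvPolynomial.map (algebraMap ℝ ℂ) a
        + MvPolynomial.C Complex.I * MvPolynomial.map (algebraMap ℝ ℂ) b)
      * (MvPolynomial.map (algebraMap ℝ ℂ) p
        + MvPolynomial.C Complex.I * MvPolynomial.map (algebraMap ℝ ℂ) q)
    = MvPolynomial.map (algebraMap ℝ ℂ) (a * p - b * q)
        + MvPolynomial.C Complex.I * MvPolynomial.map (algebraMap ℝ ℂ) (a * q + b * p) := by
  simp only [map_sub, map_add, map_mul]
  linear_combination (MvPolynomial.map (algebraMap ℝ ℂ) b
    * MvPolynomial.map (algebraMap ℝ ℂ) q) * (aux_II (n := n))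

private lemma aux_exists {n : ℕ} (F : MvPolynomial (Fin n) ℂ) :
    ∃ p q : MvPolynomial (Fin n) ℝ,
      F = MvPolynomial.map (algebraMap ℝ ℂ) p
        + MvPolynomial.C Complex.I * MvPolynomial.map (algebraMap ℝ ℂ) q := by
  induction F using MvPolynomial.induction_on with
  | C z =>
      refine ⟨MvPolynomial.C z.re, MvPolynomial.C z.im, ?_⟩
      rw [MvPolynomial.map_C, MvPolynomial.map_C, ← map_mul, ← map_add]
      congr 1
      simp [Complex.ext_iff]
  | add f g hf hg =>
      obtain ⟨p, q, hp⟩ := hf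
      obtain ⟨p', q', hq⟩ := hg
      exact ⟨p + p', q + q', by rw [hp, hq]; simp only [map_add]; ring⟩
  | mul_X f i hf =>
      obtain ⟨p, q, hp⟩ := hf
      refine ⟨p * MvPolynomial.X i, q * MvPolynomial.X i, ?_⟩
      rw [hp]; simp only [map_mul, MvPolynomial.map_X]; ring

private lemma aux_mem {n : ℕ} (I : Ideal (MvPolynomial (Fin n) ℝ))
    (F : MvPolynomial (Fin n) ℂ)
    (hF : F ∈ Ideal.map (MvPolynomial.map (algebraMap ℝ ℂ)) I) :
    ∃ p ∈ I, ∃ q ∈ I,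
      F = MvPolynomial.map (algebraMap ℝ ℂ) p
        + MvPolynomial.C Complex.I * MvPolynomial.map (algebraMap ℝ ℂ) q := by
  refine Submodule.span_induction ?_ ?_ ?_ ?_ hF
  · rintro x ⟨f, hf, rfl⟩
    exact ⟨f, hf, 0, I.zero_mem, by simp⟩
  · exact ⟨0, I.zero_mem, 0, I.zero_mem, by simp⟩
  · rintro x y - - ⟨p, hp, q, hq, rfl⟩ ⟨p', hp', q', hq', rfl⟩
    exact ⟨p + p', I.add_mem hp hp', q + q', I.add_mem hq hq',
      by simp only [map_add]; ring⟩
  · rintro c x - ⟨p, hp, q, hq, rfl⟩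
    obtain ⟨a, b, rfl⟩ := aux_exists c
    refine ⟨a * p - b * q, I.sub_mem (I.mul_mem_left a hp) (I.mul_mem_left b hq),
      a * q + b * p, I.add_mem (I.mul_mem_left a hq) (I.mul_mem_left b hp), ?_⟩
    simpa [smul_eq_mul] using aux_mul a b p q

private lemma aux_mem' {n : ℕ} (I : Ideal (MvPolynomial (Fin n) ℝ))
    (p q : MvPolynomial (Fin n) ℝ) (hp : p ∈ I) (hq : q ∈ I) :
    MvPolynomial.map (algebraMap ℝ ℂ) p
        + MvPolynomial.C Complex.I * MvPolynomial.map (algebraMap ℝ ℂ) q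
      ∈ Ideal.map (MvPolynomial.map (algebraMap ℝ ℂ)) I := by
  exact Ideal.add_mem _ (Ideal.mem_map_of_mem _ hp)
    (Ideal.mul_mem_left _ _ (Ideal.mem_map_of_mem _ hq))

/-- If `I` is a real prime ideal of `ℝ[x]`, then its extension to `ℂ[x]` is prime. -/
theorem real_prime_extension_isPrime {n : ℕ} (I : Ideal (MvPolynomial (Fin n) ℝ))
    (hprime : I.IsPrime) (hne : I ≠ ⊤) (hreal : IsRealIdeal I) :
    (Ideal.map (MvPolynomial.map (algebraMap ℝ ℂ)) I).IsPrime := by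
  constructor
  · intro htop
    have h1 : (1 : MvPolynomial (Fin n) ℂ) ∈ Ideal.map (MvPolynomial.map (algebraMap ℝ ℂ)) I := by
      rw [htop]; trivial
    obtain ⟨p, hp, q, hq, hpq⟩ := aux_mem I 1 h1
    have h2 : (1 : MvPolynomial (Fin n) ℝ) = p := by
      have := aux_unique 1 0 p q (by simpa using hpq)
      exact this.1
    exact hne (Ideal.eq_top_iff_one I |>.mpr (h2 ▸ hp))
  · intro F G hFG
    obtain ⟨p₁, q₁, rfl⟩ := aux_exists F
    obtain ⟨p₂, q₂, rfl⟩ := aux_exists G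
    rw [aux_mul] at hFG
    obtain ⟨r, hr, s, hs, hrs⟩ := aux_mem I _ hFG
    obtain ⟨h1, h2⟩ := aux_unique _ _ _ _ hrs
    have hA : p₁ * p₂ - q₁ * q₂ ∈ I := h1 ▸ hr
    have hB : p₁ * q₂ + q₁ * p₂ ∈ I := h2 ▸ hs
    by_cases hu : p₁ ^ 2 + q₁ ^ 2 ∈ I
    · left
      have hsum : (∑ i : Fin 2, (![p₁, q₁] i) ^ 2) ∈ I := by
        simpa [Fin.sum_univ_two] using hu
      have hp1 : p₁ ∈ I := by simpa using hreal 2 ![p₁, q₁] hsum 0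
      have hq1 : q₁ ∈ I := by simpa using hreal 2 ![p₁, q₁] hsum 1
      exact aux_mem' I p₁ q₁ hp1 hq1
    · right
      have hp2 : (p₁ ^ 2 + q₁ ^ 2) * p₂ ∈ I := by
        have : (p₁ ^ 2 + q₁ ^ 2) * p₂
            = p₁ * (p₁ * p₂ - q₁ * q₂) + q₁ * (p₁ * q₂ + q₁ * p₂) := by ring
        rw [this]
        exact I.add_mem (I.mul_mem_left _ hA) (I.mul_mem_left _ hB)
      have hq2 : (p₁ ^ 2 + q₁ ^ 2) * q₂ ∈ I := by
        have : (p₁ ^ 2 + q₁ ^ 2) * q₂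
            = p₁ * (p₁ * q₂ + q₁ * p₂) - q₁ * (p₁ * p₂ - q₁ * q₂) := by ring
        rw [this]
        exact I.sub_mem (I.mul_mem_left _ hB) (I.mul_mem_left _ hA)
      exact aux_mem' I p₂ q₂
        ((hprime.mem_or_mem hp2).resolve_left hu)
        ((hprime.mem_or_mem hq2).resolve_left hu)
end
end

section
/- Let I = I₁ ∩ ⋯ ∩ I_k be a primary decomposition of an ideal I in ℝ[x₁,…,xₙ]. Then I is real if and only if each Iₜ is a real prime ideal. -/
open MvPolynomial

noncomputable section

lemma isRadical_of_sq {R : Type*} [CommRing R] (J : Ideal R)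
    (h : ∀ f : R, f ^ 2 ∈ J → f ∈ J) : J.IsRadical := by
  intro x hx
  obtain ⟨m, hm⟩ := hx
  induction m using Nat.strong_induction_on generalizing x with
  | _ m ih =>
    match m, hm with
    | 0, hm => simpa using J.mul_mem_left x hm
    | 1, hm => simpa using hm
    | (m+2), hm =>
      have key : x ^ ((m + 3) / 2) ∈ J := by
        apply h
        rw [← pow_mul]
        rcases Nat.even_or_odd m with ⟨c, hc⟩ | ⟨c, hc⟩
        · have : (m + 3) / 2 * 2 = m + 2 := by omega
          rw [this]; exact hm
        · have : (m + 3) / 2 * 2 = (m + 2) + 1 := by omega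
          rw [this, pow_succ]
          exact J.mul_mem_right _ hm
      exact ih ((m + 3) / 2) (by omega) key

lemma isRadical_of_isReal {n : ℕ} {I : Ideal (MvPolynomial (Fin n) ℝ)}
    (h : IsRealIdeal I) : I.IsRadical := by
  refine isRadical_of_sq I fun f hf => ?_
  have := h 1 (fun _ => f) (by simpa using hf) 0
  exact this

/-- Given an irredundant primary decomposition `I = I₁ ∩ ⋯ ∩ I_k`, the ideal `I`
is real iff each `Iₜ` is a real prime ideal. -/
theorem isRealIdeal_iff_primary_components {n k : ℕ}
    (I : Ideal (MvPolynomial (Fin n) ℝ)) (J : Fin k → Ideal (MvPolynomial (Fin n) ℝ))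
    (hdec : I = ⨅ t, J t) (hprimary : ∀ t, (J t).IsPrimary)
    (hirr : ∀ t, ¬ (⨅ s ∈ ({t}ᶜ : Set (Fin k)), J s) ≤ J t) :
    IsRealIdeal I ↔ ∀ t, (J t).IsPrime ∧ IsRealIdeal (J t) := by
  constructor
  · intro hI t
    -- extract g ∈ ⋂_{s ≠ t} J s, g ∉ J t
    obtain ⟨g, hg, hgt⟩ := SetLike.not_le_iff_exists.mp (hirr t)
    have hgs : ∀ s, s ≠ t → g ∈ J s := by
      intro s hs
      have := Ideal.mem_iInf.mp hg s
      exact Ideal.mem_iInf.mp this hs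
    have hIrad : I.IsRadical := isRadical_of_isReal hI
    have hIle : ∀ s, I ≤ J s := by
      intro s; rw [hdec]; exact iInf_le _ s
    -- g ∉ radical (J t)
    have hgrad : g ∉ (J t).radical := by
      intro ⟨m, hm⟩
      apply hgt
      apply hIle t
      apply hIrad
      refine ⟨m, ?_⟩
      rw [hdec, Ideal.mem_iInf]
      intro s
      by_cases hst : s = t
      · rw [hst]; exact hm
      · match m with
        | 0 => simp only [pow_zero] at hm; exact absurd (by simpa using (J t).mul_mem_left g hm) hgt
        | m+1 => exact Ideal.pow_mem_of_mem _ (hgs s hst) _ (Nat.succ_pos m)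
    -- J t is real
    have hreal : IsRealIdeal (J t) := by
      intro m f hf i
      have hsum : (∑ i, (g * f i) ^ 2) ∈ I := by
        rw [hdec, Ideal.mem_iInf]
        intro s
        by_cases hst : s = t
        · subst hst
          have : (∑ i, (g * f i) ^ 2) = g ^ 2 * ∑ i, f i ^ 2 := by
            rw [Finset.mul_sum]; congr 1; ext i; ring
          rw [this]
          exact Ideal.mul_mem_left _ _ hf
        · refine Ideal.sum_mem _ fun i _ => ?_
          have : (g * f i) ^ 2 = g * (g * f i ^ 2) := by ring
          rw [this]
          exact Ideal.mul_mem_right _ _ (hgs s hst)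
      have hgf : g * f i ∈ J t := hIle t (hI m _ hsum i)
      rcases ((Ideal.isPrimary_iff.mp (hprimary t)).2 (mul_comm g (f i) ▸ hgf)) with h1 | h1
      · exact h1
      · exact absurd h1 hgrad
    refine ⟨?_, hreal⟩
    -- J t prime: primary + radical
    have hJrad : (J t).radical = J t :=
      ((Ideal.radical_eq_iff).mpr (isRadical_of_sq _ fun f hf =>
        hreal 1 (fun _ => f) (by simpa using hf) 0))
    rw [← hJrad]
    exact Ideal.isPrime_radical (hprimary t)
  · intro h m f hf i
    rw [hdec, Ideal.mem_iInf] at hf ⊢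
    intro s
    exact (h s).2 m f (hf s) i
end
end

section
/- Let I be a prime ideal of ℝ[x₁,…,xₙ] such that the extension I' = ℂ[x]·I is not prime in ℂ[x₁,…,xₙ]. Then there exist polynomials a, b ∈ ℝ[x] with a ∉ I and b ∉ I such that a² + b² ∈ I; in particular I is not real. -/
open MvPolynomial

noncomputable section

private abbrev φ (n : ℕ) : MvPolynomial (Fin n) ℝ →+* MvPolynomial (Fin n) ℂ :=
  MvPolynomial.map (algebraMap ℝ ℂ)

private lemma my_decomp {n : ℕ} (p : MvPolynomial (Fin n) ℂ) :
    ∃ a b : MvPolynomial (Fin n) ℝ, p = φ n a + C Complex.I * φ n b := by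
  induction p using MvPolynomial.induction_on with
  | C c =>
      refine ⟨C c.re, C c.im, ?_⟩
      simp only [φ, map_C, ← C_mul, ← C_add, Complex.coe_algebraMap]
      rw [mul_comm, Complex.re_add_im]
  | add p q hp hq =>
      obtain ⟨a, b, rfl⟩ := hp; obtain ⟨c, d, rfl⟩ := hq
      exact ⟨a + c, b + d, by push_cast [map_add]; ring⟩
  | mul_X p i hp =>
      obtain ⟨a, b, rfl⟩ := hp
      refine ⟨a * X i, b * X i, ?_⟩
      simp only [map_mul, map_X, φ]
      ring

private lemma my_zero {n : ℕ} {a b : MvPolynomial (Fin n) ℝ}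
    (h : φ n a + C Complex.I * φ n b = 0) : a = 0 ∧ b = 0 := by
  constructor <;> ext m <;>
  · have hc := congrArg (coeff m) h
    simp only [coeff_add, coeff_map, coeff_C_mul, coeff_zero, Complex.ext_iff] at hc
    simp_all [Complex.ext_iff]

private lemma my_mul {n : ℕ} (a b c d : MvPolynomial (Fin n) ℝ) :
    (φ n a + C Complex.I * φ n b) * (φ n c + C Complex.I * φ n d)
      = φ n (a * c - b * d) + C Complex.I * φ n (a * d + b * c) := by
  have h2 : (C Complex.I : MvPolynomial (Fin n) ℂ) * C Complex.I = -1 := by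
    rw [← C_mul, Complex.I_mul_I, map_neg, map_one]
  simp only [map_mul, map_sub, map_add]
  linear_combination (φ n b * φ n d) * h2

private lemma my_mem {n : ℕ} (I : Ideal (MvPolynomial (Fin n) ℝ))
    (p : MvPolynomial (Fin n) ℂ) :
    p ∈ Ideal.map (MvPolynomial.map (algebraMap ℝ ℂ)) I ↔
      ∃ a ∈ I, ∃ b ∈ I, p = φ n a + C Complex.I * φ n b := by
  constructor
  · intro hp
    let J : Ideal (MvPolynomial (Fin n) ℂ) :=
      { carrier := {p | ∃ a ∈ I, ∃ b ∈ I, p = φ n a + C Complex.I * φ n b}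
        zero_mem' := ⟨0, I.zero_mem, 0, I.zero_mem, by simp⟩
        add_mem' := by
          rintro x y ⟨a, ha, b, hb, rfl⟩ ⟨c, hc, d, hd, rfl⟩
          exact ⟨a + c, I.add_mem ha hc, b + d, I.add_mem hb hd, by push_cast [map_add]; ring⟩
        smul_mem' := by
          rintro r x ⟨a, ha, b, hb, rfl⟩
          obtain ⟨u, v, rfl⟩ := my_decomp r
          refine ⟨u * a - v * b, I.sub_mem (I.mul_mem_left u ha) (I.mul_mem_left v hb),
            u * b + v * a, I.add_mem (I.mul_mem_left u hb) (I.mul_mem_left v ha), ?_⟩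
          simpa using my_mul u v a b }
    have hle : Ideal.map (MvPolynomial.map (algebraMap ℝ ℂ)) I ≤ J := by
      rw [Ideal.map_le_iff_le_comap]
      intro x hx
      exact ⟨x, hx, 0, I.zero_mem, by simp⟩
    exact hle hp
  · rintro ⟨a, ha, b, hb, rfl⟩
    exact Ideal.add_mem _ (Ideal.mem_map_of_mem _ ha)
      (Ideal.mul_mem_left _ _ (Ideal.mem_map_of_mem _ hb))

private lemma aux_exists_s4 {n : ℕ}
    (I : Ideal (MvPolynomial (Fin n) ℝ)) (hprime : I.IsPrime)
    (hnot : ¬ (Ideal.map (MvPolynomial.map (algebraMap ℝ ℂ)) I).IsPrime) :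
    (∃ a b : MvPolynomial (Fin n) ℝ, a ∉ I ∧ b ∉ I ∧ a ^ 2 + b ^ 2 ∈ I) := by
  have key : ∀ x y : MvPolynomial (Fin n) ℝ, x ^ 2 + y ^ 2 ∈ I → ¬(x ∈ I ∧ y ∈ I) →
      x ∉ I ∧ y ∉ I := by
    have step : ∀ u v : MvPolynomial (Fin n) ℝ, u ^ 2 + v ^ 2 ∈ I → u ∈ I → v ∈ I := by
      intro u v hs hu
      have hv2 : v ^ 2 ∈ I := by
        have hu2 : u ^ 2 ∈ I := by rw [sq]; exact I.mul_mem_left u hu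
        have := I.sub_mem hs hu2
        simpa using this
      exact hprime.mem_of_pow_mem 2 hv2
    intro x y hs hn
    constructor
    · intro hx; exact hn ⟨hx, step x y hs hx⟩
    · intro hy; exact hn ⟨step y x (by rwa [add_comm]) hy, hy⟩
  rcases Ideal.not_isPrime_iff.mp hnot with htop | ⟨f, hf, g, hg, hfg⟩
  · exfalso
    have h1 : (1 : MvPolynomial (Fin n) ℂ) ∈ Ideal.map (MvPolynomial.map (algebraMap ℝ ℂ)) I := by
      rw [htop]; exact Submodule.mem_top
    obtain ⟨a, ha, b, hb, h⟩ := (my_mem I _).mp h1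
    have h0 : φ n (a - 1) + C Complex.I * φ n b = 0 := by
      rw [map_sub, map_one]; linear_combination -h
    have := (my_zero h0).1
    have : a = 1 := sub_eq_zero.mp this
    exact hprime.ne_top (I.eq_top_of_isUnit_mem (this ▸ ha) isUnit_one)
  · obtain ⟨a, b, rfl⟩ := my_decomp f
    obtain ⟨c, d, rfl⟩ := my_decomp g
    have hnab : ¬(a ∈ I ∧ b ∈ I) := fun ⟨ha, hb⟩ => hf ((my_mem I _).mpr ⟨a, ha, b, hb, rfl⟩)
    have hncd : ¬(c ∈ I ∧ d ∈ I) := fun ⟨hc, hd⟩ => hg ((my_mem I _).mpr ⟨c, hc, d, hd, rfl⟩)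
    rw [my_mul] at hfg
    obtain ⟨a', ha', b', hb', h⟩ := (my_mem I _).mp hfg
    have h0 : φ n ((a * c - b * d) - a') + C Complex.I * φ n ((a * d + b * c) - b') = 0 := by
      simp only [map_sub, map_add] at h ⊢; linear_combination h
    obtain ⟨h1, h2⟩ := my_zero h0
    have hm1 : a * c - b * d ∈ I := by rwa [sub_eq_zero.mp h1]
    have hm2 : a * d + b * c ∈ I := by rwa [sub_eq_zero.mp h2]
    have hsum : (a ^ 2 + b ^ 2) * (c ^ 2 + d ^ 2) ∈ I := by
      have : (a ^ 2 + b ^ 2) * (c ^ 2 + d ^ 2)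
          = (a * c - b * d) ^ 2 + (a * d + b * c) ^ 2 := by ring
      rw [this]
      exact I.add_mem (I.pow_mem_of_mem hm1 2 (by norm_num)) (I.pow_mem_of_mem hm2 2 (by norm_num))
    rcases hprime.mem_or_mem hsum with h | h
    · obtain ⟨hx, hy⟩ := key a b h hnab
      exact ⟨a, b, hx, hy, h⟩
    · obtain ⟨hx, hy⟩ := key c d h hncd
      exact ⟨c, d, hx, hy, h⟩

/-- If `I` is prime in `ℝ[x]` but its extension to `ℂ[x]` is not prime, then there are
`a, b ∉ I` with `a² + b² ∈ I`; in particular `I` is not real. -/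
theorem exists_sum_sq_of_extension_not_prime {n : ℕ}
    (I : Ideal (MvPolynomial (Fin n) ℝ)) (hprime : I.IsPrime)
    (hnot : ¬ (Ideal.map (MvPolynomial.map (algebraMap ℝ ℂ)) I).IsPrime) :
    (∃ a b : MvPolynomial (Fin n) ℝ, a ∉ I ∧ b ∉ I ∧ a ^ 2 + b ^ 2 ∈ I) ∧
      ¬ IsRealIdeal I := by
  obtain ⟨a, b, ha, hb, hab⟩ := aux_exists_s4 I hprime hnot
  refine ⟨⟨a, b, ha, hb, hab⟩, ?_⟩
  intro hreal
  have hsum : (∑ i, ![a, b] i ^ 2) ∈ I := by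
    simpa [Fin.sum_univ_two] using hab
  have h0 := hreal 2 ![a, b] hsum 0
  simp only [Matrix.cons_val_zero] at h0
  exact ha h0
end
end

section
/- The ideal J = ⟨y² − xz, x³ − yz, x²y − z²⟩ in ℝ[x, y, z] satisfies 𝓥(J) ⊇ {(t³, t⁴, t⁵) : t ∈ ℝ}, and the vanishing ideal of the curve {(t³, t⁴, t⁵) : t ∈ ℝ} equals J; in particular J is a real prime ideal. -/
open MvPolynomial

noncomputable section

namespace MonomialCurveAux

/-- The parametrization map `x ↦ t³, y ↦ t⁴, z ↦ t⁵`. -/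
def φ : MvPolynomial (Fin 3) ℝ →ₐ[ℝ] Polynomial ℝ :=
  MvPolynomial.aeval ![Polynomial.X ^ 3, Polynomial.X ^ 4, Polynomial.X ^ 5]

/-- Inclusion of `ℝ[x]` in `ℝ[x,y,z]`. -/
def ι : Polynomial ℝ →ₐ[ℝ] MvPolynomial (Fin 3) ℝ :=
  Polynomial.aeval (MvPolynomial.X 0)

lemma ι_X : ι Polynomial.X = MvPolynomial.X 0 := by simp [ι]

lemma ι_C (a : ℝ) : ι (Polynomial.C a) = MvPolynomial.C a := by
  simp [ι, MvPolynomial.algebraMap_eq]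

lemma φ_X0 : φ (X 0) = Polynomial.X ^ 3 := by simp [φ]
lemma φ_X1 : φ (X 1) = Polynomial.X ^ 4 := by simp [φ]
lemma φ_X2 : φ (X 2) = Polynomial.X ^ 5 := by simp [φ]

lemma φ_ι (p : Polynomial ℝ) : φ (ι p) = Polynomial.expand ℝ 3 p := by
  have h := Polynomial.aeval_algHom_apply φ (MvPolynomial.X 0) p
  rw [ι, ← h, φ_X0, Polynomial.aeval_def, Polynomial.algebraMap_eq]
  rfl

lemma eval_eq (f : MvPolynomial (Fin 3) ℝ) (t : ℝ) :
    MvPolynomial.eval ![t ^ 3, t ^ 4, t ^ 5] f = Polynomial.eval t (φ f) := by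
  have h := MvPolynomial.comp_aeval_apply (R := ℝ)
    (f := (![Polynomial.X ^ 3, Polynomial.X ^ 4, Polynomial.X ^ 5] :
      Fin 3 → Polynomial ℝ))
    (Polynomial.aeval (R := ℝ) t) f
  have h2 : (fun i => Polynomial.aeval t ((![Polynomial.X ^ 3, Polynomial.X ^ 4,
      Polynomial.X ^ 5] : Fin 3 → Polynomial ℝ) i)) = ![t ^ 3, t ^ 4, t ^ 5] := by
    funext i
    fin_cases i <;> simp
  rw [h2] at h
  exact h.symm

section Coeff

lemma coeff_aux_zero (s : Polynomial ℝ) (m n : ℕ) (h1 : m ≤ n → ¬ (3 ∣ n - m)) :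
    (Polynomial.X ^ m * Polynomial.expand ℝ 3 s).coeff n = 0 := by
  rw [Polynomial.X_pow_mul, Polynomial.coeff_mul_X_pow']
  split_ifs with h
  · rw [Polynomial.coeff_expand (by norm_num), if_neg (h1 h)]
  · rfl

lemma coeff_aux_eq (s : Polynomial ℝ) (m k : ℕ) :
    (Polynomial.X ^ m * Polynomial.expand ℝ 3 s).coeff (3 * k + m) = s.coeff k := by
  rw [Polynomial.X_pow_mul, Polynomial.coeff_mul_X_pow, Polynomial.coeff_expand_mul'
    (by norm_num)]

lemma triple_zero (p q r : Polynomial ℝ)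
    (h : Polynomial.expand ℝ 3 p + Polynomial.X ^ 4 * Polynomial.expand ℝ 3 q
      + Polynomial.X ^ 5 * Polynomial.expand ℝ 3 r = 0) :
    p = 0 ∧ q = 0 ∧ r = 0 := by
  have hc : ∀ n, (Polynomial.X ^ 0 * Polynomial.expand ℝ 3 p).coeff n
      + (Polynomial.X ^ 4 * Polynomial.expand ℝ 3 q).coeff n
      + (Polynomial.X ^ 5 * Polynomial.expand ℝ 3 r).coeff n = 0 := by
    intro n
    have := congrArg (fun f => Polynomial.coeff f n) h
    simpa [pow_zero, one_mul] using this
  refine ⟨?_, ?_, ?_⟩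
  · ext k
    have := hc (3 * k + 0)
    rw [coeff_aux_eq, coeff_aux_zero _ _ _ (by omega), coeff_aux_zero _ _ _ (by omega)] at this
    simpa using this
  · ext k
    have := hc (3 * k + 4)
    rw [coeff_aux_eq, coeff_aux_zero _ _ _ (by omega), coeff_aux_zero _ _ _ (by omega)] at this
    simpa using this
  · ext k
    have := hc (3 * k + 5)
    rw [coeff_aux_eq, coeff_aux_zero _ _ _ (by omega), coeff_aux_zero _ _ _ (by omega)] at this
    simpa using this

end Coeff

variable (J : Ideal (MvPolynomial (Fin 3) ℝ))
variable (hJ : J = Ideal.span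
      {MvPolynomial.X 1 ^ 2 - MvPolynomial.X 0 * MvPolynomial.X 2,
       MvPolynomial.X 0 ^ 3 - MvPolynomial.X 1 * MvPolynomial.X 2,
       MvPolynomial.X 0 ^ 2 * MvPolynomial.X 1 - MvPolynomial.X 2 ^ 2})

include hJ

lemma g1_mem : MvPolynomial.X 1 ^ 2 - MvPolynomial.X 0 * MvPolynomial.X 2 ∈ J := by
  rw [hJ]; exact Ideal.subset_span (by simp)

lemma g2_mem : MvPolynomial.X 0 ^ 3 - MvPolynomial.X 1 * MvPolynomial.X 2 ∈ J := by
  rw [hJ]; exact Ideal.subset_span (by simp)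

lemma g3_mem : MvPolynomial.X 0 ^ 2 * MvPolynomial.X 1 - MvPolynomial.X 2 ^ 2 ∈ J := by
  rw [hJ]; exact Ideal.subset_span (by simp)

lemma J_le_ker : ∀ f ∈ J, φ f = 0 := by
  rw [hJ]
  intro f hf
  have : Ideal.span ({MvPolynomial.X 1 ^ 2 - MvPolynomial.X 0 * MvPolynomial.X 2,
       MvPolynomial.X 0 ^ 3 - MvPolynomial.X 1 * MvPolynomial.X 2,
       MvPolynomial.X 0 ^ 2 * MvPolynomial.X 1 - MvPolynomial.X 2 ^ 2} :
       Set (MvPolynomial (Fin 3) ℝ)) ≤ RingHom.ker φ.toRingHom := by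
    rw [Ideal.span_le]
    intro g hg
    simp only [Set.mem_insert_iff, Set.mem_singleton_iff] at hg
    rcases hg with h | h | h <;> subst h <;>
      simp only [SetLike.mem_coe, RingHom.mem_ker, AlgHom.toRingHom_eq_coe,
        RingHom.coe_coe, map_sub, map_mul, map_pow, φ_X0, φ_X1, φ_X2] <;> ring
  exact this hf

/-- Every polynomial is congruent mod `J` to `p(x) + y q(x) + z r(x)`. -/
lemma reduce : ∀ f : MvPolynomial (Fin 3) ℝ, ∃ p q r : Polynomial ℝ,
    f - (ι p + MvPolynomial.X 1 * ι q + MvPolynomial.X 2 * ι r) ∈ J := by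
  intro f
  induction f using MvPolynomial.induction_on with
  | C a =>
    exact ⟨Polynomial.C a, 0, 0, by simp [ι_C]⟩
  | add f g hf hg =>
    obtain ⟨p, q, r, hm⟩ := hf
    obtain ⟨p', q', r', hm'⟩ := hg
    refine ⟨p + p', q + q', r + r', ?_⟩
    have : f + g - (ι (p + p') + MvPolynomial.X 1 * ι (q + q')
        + MvPolynomial.X 2 * ι (r + r'))
        = (f - (ι p + MvPolynomial.X 1 * ι q + MvPolynomial.X 2 * ι r))
        + (g - (ι p' + MvPolynomial.X 1 * ι q' + MvPolynomial.X 2 * ι r')) := by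
      simp only [map_add]; ring
    rw [this]
    exact J.add_mem hm hm'
  | mul_X f i hf =>
    obtain ⟨p, q, r, hm⟩ := hf
    fin_cases i
    · refine ⟨Polynomial.X * p, Polynomial.X * q, Polynomial.X * r, ?_⟩
      show f * MvPolynomial.X 0 - _ ∈ J
      have : f * MvPolynomial.X 0 - (ι (Polynomial.X * p)
          + MvPolynomial.X 1 * ι (Polynomial.X * q)
          + MvPolynomial.X 2 * ι (Polynomial.X * r))
          = (f - (ι p + MvPolynomial.X 1 * ι q + MvPolynomial.X 2 * ι r))
            * MvPolynomial.X 0 := by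
        simp only [map_mul, ι_X]; ring
      rw [this]
      exact J.mul_mem_right _ hm
    · refine ⟨Polynomial.X ^ 3 * r, p, Polynomial.X * q, ?_⟩
      show f * MvPolynomial.X 1 - _ ∈ J
      have : f * MvPolynomial.X 1 - (ι (Polynomial.X ^ 3 * r)
          + MvPolynomial.X 1 * ι p
          + MvPolynomial.X 2 * ι (Polynomial.X * q))
          = (f - (ι p + MvPolynomial.X 1 * ι q + MvPolynomial.X 2 * ι r))
            * MvPolynomial.X 1
          + ι q * (MvPolynomial.X 1 ^ 2 - MvPolynomial.X 0 * MvPolynomial.X 2)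
          - ι r * (MvPolynomial.X 0 ^ 3 - MvPolynomial.X 1 * MvPolynomial.X 2) := by
        simp only [map_mul, map_pow, ι_X]; ring
      rw [this]
      exact J.sub_mem (J.add_mem (J.mul_mem_right _ hm)
        (J.mul_mem_left _ (g1_mem J hJ))) (J.mul_mem_left _ (g2_mem J hJ))
    · refine ⟨Polynomial.X ^ 3 * q, Polynomial.X ^ 2 * r, p, ?_⟩
      show f * MvPolynomial.X 2 - _ ∈ J
      have : f * MvPolynomial.X 2 - (ι (Polynomial.X ^ 3 * q)
          + MvPolynomial.X 1 * ι (Polynomial.X ^ 2 * r)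
          + MvPolynomial.X 2 * ι p)
          = (f - (ι p + MvPolynomial.X 1 * ι q + MvPolynomial.X 2 * ι r))
            * MvPolynomial.X 2
          - ι q * (MvPolynomial.X 0 ^ 3 - MvPolynomial.X 1 * MvPolynomial.X 2)
          - ι r * (MvPolynomial.X 0 ^ 2 * MvPolynomial.X 1 - MvPolynomial.X 2 ^ 2) := by
        simp only [map_mul, map_pow, ι_X]; ring
      rw [this]
      exact J.sub_mem (J.sub_mem (J.mul_mem_right _ hm)
        (J.mul_mem_left _ (g2_mem J hJ))) (J.mul_mem_left _ (g3_mem J hJ))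

lemma ker_le_J : ∀ f : MvPolynomial (Fin 3) ℝ, φ f = 0 → f ∈ J := by
  intro f hf
  obtain ⟨p, q, r, hm⟩ := reduce J hJ f
  have h0 : φ (f - (ι p + MvPolynomial.X 1 * ι q + MvPolynomial.X 2 * ι r)) = 0 :=
    J_le_ker J hJ _ hm
  rw [map_sub, hf, zero_sub, neg_eq_zero] at h0
  simp only [map_add, map_mul, φ_ι, φ_X1, φ_X2] at h0
  obtain ⟨hp, hq, hr⟩ := triple_zero p q r h0
  subst hp; subst hq; subst hr
  simpa using hm

lemma J_eq_ker : J = RingHom.ker φ.toRingHom := by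
  ext f
  constructor
  · intro h; exact J_le_ker J hJ f h
  · intro h; exact ker_le_J J hJ f h

end MonomialCurveAux

/-- The ideal `J = ⟨y² - xz, x³ - yz, x²y - z²⟩` of `ℝ[x,y,z]` contains the curve
`{(t³, t⁴, t⁵)}` in its zero set, equals the vanishing ideal of that curve, and is a real
prime ideal. -/
theorem monomial_curve_ideal_real_prime (J : Ideal (MvPolynomial (Fin 3) ℝ))
    (hJ : J = Ideal.span
      {MvPolynomial.X 1 ^ 2 - MvPolynomial.X 0 * MvPolynomial.X 2,
       MvPolynomial.X 0 ^ 3 - MvPolynomial.X 1 * MvPolynomial.X 2,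
       MvPolynomial.X 0 ^ 2 * MvPolynomial.X 1 - MvPolynomial.X 2 ^ 2}) :
    {p : Fin 3 → ℝ | ∃ t : ℝ, p 0 = t ^ 3 ∧ p 1 = t ^ 4 ∧ p 2 = t ^ 5} ⊆
      MvPolynomial.zeroLocus ℝ J ∧
    MvPolynomial.vanishingIdeal ℝ
      {p : Fin 3 → ℝ | ∃ t : ℝ, p 0 = t ^ 3 ∧ p 1 = t ^ 4 ∧ p 2 = t ^ 5} = J ∧
    J.IsPrime ∧
    MvPolynomial.vanishingIdeal ℝ (MvPolynomial.zeroLocus ℝ J) = J := by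
  have hcurve : {p : Fin 3 → ℝ | ∃ t : ℝ, p 0 = t ^ 3 ∧ p 1 = t ^ 4 ∧ p 2 = t ^ 5} ⊆
      MvPolynomial.zeroLocus ℝ J := by
    rintro x ⟨t, h0, h1, h2⟩
    rw [MvPolynomial.mem_zeroLocus_iff]
    intro g hg
    have hx : x = ![t ^ 3, t ^ 4, t ^ 5] := by
      funext i; fin_cases i <;> simpa
    show MvPolynomial.eval x g = 0
    rw [hx, MonomialCurveAux.eval_eq, MonomialCurveAux.J_le_ker J hJ g hg,
      Polynomial.eval_zero]
  have hVI : MvPolynomial.vanishingIdeal ℝ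
      {p : Fin 3 → ℝ | ∃ t : ℝ, p 0 = t ^ 3 ∧ p 1 = t ^ 4 ∧ p 2 = t ^ 5} = J := by
    apply le_antisymm
    · intro g hg
      rw [MvPolynomial.mem_vanishingIdeal_iff] at hg
      apply MonomialCurveAux.ker_le_J J hJ
      apply Polynomial.funext
      intro t
      rw [Polynomial.eval_zero, ← MonomialCurveAux.eval_eq]
      exact hg ![t ^ 3, t ^ 4, t ^ 5] ⟨t, by norm_num, by norm_num, rfl⟩
    · exact le_trans (MvPolynomial.le_vanishingIdeal_zeroLocus J)
        (MvPolynomial.vanishingIdeal_anti_mono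
          (A := {p : Fin 3 → ℝ | ∃ t : ℝ, p 0 = t ^ 3 ∧ p 1 = t ^ 4 ∧ p 2 = t ^ 5})
          (B := MvPolynomial.zeroLocus ℝ J) hcurve)
  refine ⟨hcurve, hVI, ?_, ?_⟩
  · rw [MonomialCurveAux.J_eq_ker J hJ]
    exact RingHom.ker_isPrime _
  · apply le_antisymm
    · refine le_trans ?_ hVI.le
      exact MvPolynomial.vanishingIdeal_anti_mono
        (A := {p : Fin 3 → ℝ | ∃ t : ℝ, p 0 = t ^ 3 ∧ p 1 = t ^ 4 ∧ p 2 = t ^ 5})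
        (B := MvPolynomial.zeroLocus ℝ J) hcurve
    · exact MvPolynomial.le_vanishingIdeal_zeroLocus J
end
end
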